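/- arXiv:0710.5381 — 4 statements merged into one kernel-verified Lean document; each statement's English description precedes it below -/
import Mathlib

section
/- Let A be the q-quaternion algebra with generating matrix x = [[α, −qγ*],[γ, α*]] and let R̂^{αβ}_{γδ} = q δ^α_γ δ^β_δ + ε^{αβ}ε_{γδ}. Then the commutation relations of the algebra are equivalent to the RTT-type relation R̂ x₁x₂ = x₁x₂ R̂, i.e. Σ R̂^{αβ}_{γδ} x^{γμ} x^{δν} = Σ x^{αγ} x^{βδ} R̂^{γδ}_{μν} for all indices. -/
open Matrix

/-- The q-deformed ε-tensor ε = [[0,1],[-q,0]]. -/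
noncomputable def eps {K : Type*} [Field K] (q : K) : Matrix (Fin 2) (Fin 2) K :=
  !![0, 1; -q, 0]

/-- The inverse ε-tensor, with entries ε^{αβ}. -/
noncomputable def epsInv {K : Type*} [Field K] (q : K) : Matrix (Fin 2) (Fin 2) K :=
  !![0, -q⁻¹; 1, 0]

/-- The braid matrix R̂^{αβ}_{γδ} = q δ^α_γ δ^β_δ + ε^{αβ} ε_{γδ}. -/
noncomputable def Rhat {K : Type*} [Field K] (q : K) :
    Matrix (Fin 2 × Fin 2) (Fin 2 × Fin 2) K :=
  Matrix.of fun p r =>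
    q * (if p.1 = r.1 then 1 else 0) * (if p.2 = r.2 then 1 else 0)
      + epsInv q p.1 p.2 * eps q r.1 r.2


lemma cancel_smul {A : Type*} [Ring A] [Algebra ℂ A] (c d : ℂ) (hc : c ≠ 0) (X Y : A)
    (h : c • X = (c * d) • Y) : X = d • Y := by
  have h2 := congrArg (fun z => c⁻¹ • z) h
  simpa [smul_smul, ← mul_assoc, inv_mul_cancel₀ hc] using h2

set_option maxHeartbeats 2000000 in
/-- the defining commutation relations of the q-quaternion algebra
are equivalent to the RTT-type relation R̂ x₁x₂ = x₁x₂ R̂. -/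
theorem relations_iff_RTT {A : Type*} [Ring A] [Algebra ℂ A] (q : ℝ) (hq : q ≠ 0)
    (a g as gs : A) :
    let x : Matrix (Fin 2) (Fin 2) A := !![a, -(algebraMap ℂ A q) * gs; g, as]
    let R : Matrix (Fin 2 × Fin 2) (Fin 2 × Fin 2) A :=
      (Rhat (q : ℂ)).map (algebraMap ℂ A)
    (a * g = algebraMap ℂ A q * (g * a) ∧
     a * gs = algebraMap ℂ A q * (gs * a) ∧
     g * as = algebraMap ℂ A q * (as * g) ∧
     gs * as = algebraMap ℂ A q * (as * gs) ∧
     a * as - as * a = algebraMap ℂ A (1 - q ^ 2) * (g * gs) ∧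
     gs * g = g * gs) ↔
    (∀ α β μ ν : Fin 2,
      ∑ γ : Fin 2, ∑ δ : Fin 2, R (α, β) (γ, δ) * x γ μ * x δ ν
        = ∑ γ : Fin 2, ∑ δ : Fin 2, x α γ * x β δ * R (γ, δ) (μ, ν))  := by
  intro x R
  have hq' : (q:ℂ) ≠ 0 := Complex.ofReal_ne_zero.mpr hq
  constructor
  · rintro ⟨h1,h2,h3,h4,h5,h6⟩ α β μ ν
    simp only [Algebra.algebraMap_eq_smul_one, smul_mul_assoc, mul_smul_comm, mul_one, one_mul,
      smul_smul, mul_assoc] at h1 h2 h3 h4 h5 h6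
    have h5' : a * as = ((1:ℂ) - (q:ℂ) ^ 2) • (g * gs) + as * a := by
      rw [← h5]; abel
    fin_cases α <;> fin_cases β <;> fin_cases μ <;> fin_cases ν <;>
      simp [x, R, Rhat, eps, epsInv, Fin.sum_univ_two, Matrix.map_apply] <;>
    (try simp only [Algebra.algebraMap_eq_smul_one, smul_mul_assoc, mul_smul_comm, mul_one,
      one_mul, smul_smul, mul_assoc, neg_neg, smul_neg, neg_smul, add_mul, neg_mul, mul_add,
      mul_neg, sub_mul, mul_sub]) <;>
    (try simp only [h1, h2, h3, h4, h5', h6, mul_smul_comm, smul_mul_assoc, smul_smul,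
      smul_add]) <;>
    match_scalars <;> field_simp <;> ring
  · intro h
    have e1 := h 1 0 0 0
    have e2 := h 0 0 1 0
    have e3 := h 1 1 1 0
    have e4 := h 1 0 1 1
    have e5 := h 1 0 0 1
    have e6 := h 1 0 1 0
    simp only [x, R] at e1 e2 e3 e4 e5 e6
    simp [Rhat, eps, epsInv, Fin.sum_univ_two, Matrix.map_apply] at e1 e2 e3 e4 e5 e6
    simp only [Algebra.algebraMap_eq_smul_one, smul_mul_assoc, mul_smul_comm, mul_one, one_mul,
      smul_smul, mul_assoc, neg_neg, smul_neg, neg_smul, add_mul, neg_mul, mul_add, mul_neg,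
      sub_mul, mul_sub, inv_mul_cancel₀ hq', mul_inv_cancel₀ hq', one_smul] at e1 e2 e3 e4 e5 e6
    have h1 : a * g = (q:ℂ) • (g * a) := e1
    have h2 : a * gs = (q:ℂ) • (gs * a) := cancel_smul _ _ hq' _ _ e2.symm
    have h3 : g * as = (q:ℂ) • (as * g) := e3.symm
    have h4 : gs * as = (q:ℂ) • (as * gs) := cancel_smul _ _ hq' _ _ e4
    have h6 : gs * g = g * gs := by
      have := cancel_smul (q:ℂ) 1 hq' (gs * g) (g * gs) (by rw [mul_one]; exact e6)
      simpa using this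
    have h5 : a * as - as * a = ((1:ℂ) - (q:ℂ) ^ 2) • (g * gs) := by
      rw [e5, sub_smul, one_smul, pow_two]; abel
    rw [Algebra.smul_def] at h1 h2 h3 h4 h5
    exact ⟨h1, h2, h3, h4, by simpa using h5, h6⟩
end

section
/- Let B be an algebra, and suppose a and x are 2×2 matrices over B whose entries mutually commute (every entry of a commutes with every entry of x), each satisfying R̂ a₁a₂ = a₁a₂ R̂ and R̂ x₁x₂ = x₁x₂ R̂. Then the matrix product ax also satisfies R̂ (ax)₁(ax)₂ = (ax)₁(ax)₂ R̂. -/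
open Matrix

/-- The RTT relation R̂ m₁m₂ = m₁m₂ R̂ for a 2×2 matrix m over an algebra. -/
def RTTrel {B : Type*} [Ring B] (R : Matrix (Fin 2 × Fin 2) (Fin 2 × Fin 2) B)
    (m : Matrix (Fin 2) (Fin 2) B) : Prop :=
  ∀ α β μ ν : Fin 2,
    ∑ γ : Fin 2, ∑ δ : Fin 2, R (α, β) (γ, δ) * m γ μ * m δ ν
      = ∑ γ : Fin 2, ∑ δ : Fin 2, m α γ * m β δ * R (γ, δ) (μ, ν)

private lemma swap4 {B : Type*} [AddCommMonoid B] (f : Fin 2 → Fin 2 → Fin 2 → Fin 2 → B) :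
    ∑ γ : Fin 2, ∑ δ : Fin 2, ∑ c : Fin 2, ∑ d : Fin 2, f γ δ c d
      = ∑ c : Fin 2, ∑ d : Fin 2, ∑ γ : Fin 2, ∑ δ : Fin 2, f γ δ c d := by
  simp only [Fin.sum_univ_two]; abel

private lemma rtt_mul {B : Type*} [Ring B] (R : Matrix (Fin 2 × Fin 2) (Fin 2 × Fin 2) B)
    (a x : Matrix (Fin 2) (Fin 2) B)
    (hcomm : ∀ i j k l : Fin 2, Commute (a i j) (x k l))
    (ha : RTTrel R a) (hx : RTTrel R x) : RTTrel R (a * x) := by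
  intro α β μ ν
  calc
    ∑ γ : Fin 2, ∑ δ : Fin 2, R (α, β) (γ, δ) * (a * x) γ μ * (a * x) δ ν
        = ∑ γ : Fin 2, ∑ δ : Fin 2, ∑ c : Fin 2, ∑ d : Fin 2,
            R (α, β) (γ, δ) * a γ c * a δ d * (x c μ * x d ν) := by
          simp only [Matrix.mul_apply, Finset.mul_sum, Finset.sum_mul]
          refine Finset.sum_congr rfl fun γ _ => Finset.sum_congr rfl fun δ _ => ?_
          rw [Finset.sum_comm]
          refine Finset.sum_congr rfl fun c _ => Finset.sum_congr rfl fun d _ => ?_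
          have h : x c μ * a δ d = a δ d * x c μ := ((hcomm δ d c μ).symm).eq
          simp only [mul_assoc]
          rw [← mul_assoc (x c μ), h, mul_assoc]
    _ = ∑ c : Fin 2, ∑ d : Fin 2,
          (∑ γ : Fin 2, ∑ δ : Fin 2, R (α, β) (γ, δ) * a γ c * a δ d) * (x c μ * x d ν) := by
          rw [swap4]
          simp only [Finset.sum_mul]
    _ = ∑ c : Fin 2, ∑ d : Fin 2,
          (∑ γ : Fin 2, ∑ δ : Fin 2, a α γ * a β δ * R (γ, δ) (c, d)) * (x c μ * x d ν) := by
          refine Finset.sum_congr rfl fun c _ => Finset.sum_congr rfl fun d _ => ?_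
          rw [ha α β c d]
    _ = ∑ γ : Fin 2, ∑ δ : Fin 2, a α γ * a β δ *
          (∑ c : Fin 2, ∑ d : Fin 2, R (γ, δ) (c, d) * x c μ * x d ν) := by
          rw [show (∑ γ : Fin 2, ∑ δ : Fin 2, a α γ * a β δ *
              (∑ c : Fin 2, ∑ d : Fin 2, R (γ, δ) (c, d) * x c μ * x d ν))
            = ∑ γ : Fin 2, ∑ δ : Fin 2, ∑ c : Fin 2, ∑ d : Fin 2,
                a α γ * a β δ * (R (γ, δ) (c, d) * x c μ * x d ν) from by
            simp only [Finset.mul_sum]]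
          rw [swap4 (fun γ δ c d => a α γ * a β δ * (R (γ, δ) (c, d) * x c μ * x d ν))]
          simp only [Finset.sum_mul]
          refine Finset.sum_congr rfl fun c _ => Finset.sum_congr rfl fun d _ => ?_
          refine Finset.sum_congr rfl fun γ _ => Finset.sum_congr rfl fun δ _ => ?_
          simp only [mul_assoc]
    _ = ∑ γ : Fin 2, ∑ δ : Fin 2, a α γ * a β δ *
          (∑ c : Fin 2, ∑ d : Fin 2, x γ c * x δ d * R (c, d) (μ, ν)) := by
          refine Finset.sum_congr rfl fun γ _ => Finset.sum_congr rfl fun δ _ => ?_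
          rw [hx γ δ μ ν]
    _ = ∑ γ : Fin 2, ∑ δ : Fin 2, (a * x) α γ * (a * x) β δ * R (γ, δ) (μ, ν) := by
          simp only [Matrix.mul_apply, Finset.mul_sum, Finset.sum_mul]
          rw [swap4 (fun γ δ c d => a α γ * a β δ * (x γ c * x δ d * R (c, d) (μ, ν)))]
          refine Finset.sum_congr rfl fun c _ => Finset.sum_congr rfl fun d _ => ?_
          rw [Finset.sum_comm]
          refine Finset.sum_congr rfl fun γ _ => Finset.sum_congr rfl fun δ _ => ?_
          simp only [mul_assoc]
          rw [← mul_assoc (a β γ), (hcomm β γ δ c).eq, mul_assoc]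

/-- if a and x are 2×2 matrices with mutually commuting entries,
each satisfying R̂ m₁m₂ = m₁m₂ R̂, then so does the matrix product ax. -/
theorem RTT_product {K : Type*} [Field K] (q : K) (hq : q ≠ 0)
    {B : Type*} [Ring B] [Algebra K B]
    (a x : Matrix (Fin 2) (Fin 2) B)
    (hcomm : ∀ i j k l : Fin 2, Commute (a i j) (x k l))
    (ha : RTTrel ((Rhat q).map (algebraMap K B)) a)
    (hx : RTTrel ((Rhat q).map (algebraMap K B)) x) :
    RTTrel ((Rhat q).map (algebraMap K B)) (a * x) :=
  rtt_mul _ a x hcomm ha hx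
end

section
/- In the localized q-quaternion algebra, the matrix T := x/|x| satisfies T† = T⁻¹ = T̄ and det_q(T) := T¹¹T²² − q T¹²T²¹ = 1, i.e. the entries of T satisfy the defining relations of SU_q(2). -/
open Matrix

/-- in the localized q-quaternion *-algebra, T := x/|x| satisfies
T† = T⁻¹ = T̄ and det_q(T) = T¹¹T²² − q T¹²T²¹ = 1, i.e. its entries satisfy
the defining relations of SU_q(2). -/
theorem T_SUq2 {A : Type*} [Ring A] [StarRing A] [Algebra ℂ A] [StarModule ℂ A]
    (q : ℝ) (hq : q ≠ 0)
    (a g : A)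
    (h1 : a * g = algebraMap ℂ A q * (g * a))
    (h2 : a * star g = algebraMap ℂ A q * (star g * a))
    (h3 : g * star a = algebraMap ℂ A q * (star a * g))
    (h4 : star g * star a = algebraMap ℂ A q * (star a * star g))
    (h5 : a * star a - star a * a = algebraMap ℂ A (1 - q ^ 2) * (g * star g))
    (h6 : star g * g = g * star g)
    -- the central positive element |x| and its central inverse |x|⁻¹
    (r rinv : A)
    (hrc : ∀ y : A, Commute r y) (hrinvc : ∀ y : A, Commute rinv y)
    (hr2 : r * r = star a * a + star g * g)
    (hrs : star r = r) (hrinvs : star rinv = rinv)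
    (hrr : r * rinv = 1) (hrr' : rinv * r = 1) :
    let x : Matrix (Fin 2) (Fin 2) A := !![a, -(algebraMap ℂ A q) * star g; g, star a]
    let T : Matrix (Fin 2) (Fin 2) A := rinv • x
    let epsA : Matrix (Fin 2) (Fin 2) A := !![0, 1; -(algebraMap ℂ A q), 0]
    let epsInvA : Matrix (Fin 2) (Fin 2) A :=
      !![0, -(algebraMap ℂ A (q⁻¹ : ℝ)); 1, 0]
    let Tbar : Matrix (Fin 2) (Fin 2) A := epsInvA * Tᵀ * epsA
    Tᴴ = Tbar ∧ T * Tbar = 1 ∧ Tbar * T = 1 ∧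
    T 0 0 * T 1 1 - algebraMap ℂ A q * (T 0 1 * T 1 0) = 1 := by
  intro x T epsA epsInvA Tbar
  have hQi : algebraMap ℂ A ((q⁻¹ : ℝ) : ℂ) * algebraMap ℂ A ((q : ℝ) : ℂ) = 1 := by
    rw [← _root_.map_mul, ← Complex.ofReal_mul, inv_mul_cancel₀ hq, Complex.ofReal_one, _root_.map_one]
  have hQc : ∀ (z : ℂ) (y : A), algebraMap ℂ A z * y = y * algebraMap ℂ A z :=
    fun z y => Algebra.commutes z y
  have key1 : ∀ y : A, algebraMap ℂ A ((q⁻¹ : ℝ) : ℂ) * y * algebraMap ℂ A ((q : ℝ) : ℂ) = y := by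
    intro y; rw [mul_assoc, ← hQc, ← mul_assoc, hQi, one_mul]
  have key2 : ∀ y : A, algebraMap ℂ A ((q⁻¹ : ℝ) : ℂ) * (algebraMap ℂ A ((q : ℝ) : ℂ) * y) = y := by
    intro y; rw [← mul_assoc, hQi, one_mul]
  have hstarQ : star (algebraMap ℂ A ((q : ℝ) : ℂ)) = algebraMap ℂ A ((q : ℝ) : ℂ) := by
    rw [← algebraMap_star_comm]
    norm_num
  -- push rinv / Q leftwards
  have hmv : ∀ y z : A, y * (rinv * z) = rinv * (y * z) := fun y z => by
    rw [← mul_assoc, ← (hrinvc y).eq, mul_assoc]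
  have hmvQ : ∀ y z : A, y * (algebraMap ℂ A ((q : ℝ) : ℂ) * z)
      = algebraMap ℂ A ((q : ℝ) : ℂ) * (y * z) := fun y z => by
    rw [← mul_assoc, ← hQc, mul_assoc]
  -- key identity
  have hmap : algebraMap ℂ A ((1 : ℂ) - (q:ℂ) ^ 2)
      = 1 - algebraMap ℂ A ((q:ℝ):ℂ) * algebraMap ℂ A ((q:ℝ):ℂ) := by
    rw [_root_.map_sub, _root_.map_one, ← _root_.map_mul, ← sq]
  have h5' : a * star a = algebraMap ℂ A ((1:ℂ) - (q:ℂ)^2) * (g * star g) + star a * a :=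
    sub_eq_iff_eq_add.mp h5
  have hkey : a * star a
      + algebraMap ℂ A ((q:ℝ):ℂ) * (algebraMap ℂ A ((q:ℝ):ℂ) * (star g * g)) = r * r := by
    rw [h5', hmap, h6, hr2, h6]
    noncomm_ring
  have hrrr : rinv * (rinv * (r * r)) = 1 := by
    rw [← mul_assoc rinv r r, hrr', one_mul, hrr']
  have hTbar : Tbar = rinv • !![star a, star g; -(algebraMap ℂ A q) * g, a] := by
    ext i j
    fin_cases i <;> fin_cases j <;>
      simp only [T, Tbar, x, epsA, epsInvA, Matrix.transpose_apply,
        Matrix.smul_apply, Matrix.mul_apply, Fin.sum_univ_two, smul_eq_mul,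
        Matrix.cons_val', Matrix.cons_val_zero, Matrix.cons_val_one, Matrix.head_cons,
        Matrix.head_fin_const, Matrix.empty_val', Matrix.cons_val_fin_one, Fin.zero_eta,
        Fin.mk_one, Fin.isValue, Matrix.of_apply, Matrix.vecHead, Matrix.vecTail,
        StarMul.star_mul, star_neg, zero_mul, mul_zero, add_zero, zero_add, mul_one, one_mul,
        mul_neg, neg_mul, neg_neg, star_star, neg_zero]
    · rw [key1]
    · rw [hmv, key2]
    · rw [mul_assoc, ← hQc]
  refine ⟨?_, ?_, ?_, ?_⟩
  · rw [hTbar]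
    ext i j
    fin_cases i <;> fin_cases j <;>
      simp only [T, x, Matrix.conjTranspose_apply, Matrix.smul_apply, smul_eq_mul,
        Matrix.cons_val', Matrix.cons_val_zero, Matrix.cons_val_one, Matrix.head_cons,
        Matrix.head_fin_const, Matrix.empty_val', Matrix.cons_val_fin_one, Fin.zero_eta,
        Fin.mk_one, Fin.isValue, Matrix.of_apply, Matrix.vecHead, Matrix.vecTail,
        StarMul.star_mul, star_neg, star_star, hrinvs, hstarQ, mul_neg, neg_mul, neg_neg]
    · rw [(hrinvc (star a)).eq]
    · rw [(hrinvc (star g)).eq]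
    · conv_rhs => rw [(hrinvc _).eq, hQc]
    · rw [(hrinvc a).eq]
  · rw [hTbar]
    ext i j
    fin_cases i <;> fin_cases j <;>
      simp only [T, x, Matrix.mul_apply, Fin.sum_univ_two, Matrix.smul_apply, smul_eq_mul,
        Matrix.cons_val', Matrix.cons_val_zero, Matrix.cons_val_one, Matrix.head_cons,
        Matrix.head_fin_const, Matrix.empty_val', Matrix.cons_val_fin_one, Fin.zero_eta,
        Fin.mk_one, Fin.isValue, Matrix.of_apply, Matrix.vecHead, Matrix.vecTail,
        Matrix.one_apply_eq, Matrix.one_apply_ne, mul_neg, neg_mul, neg_neg,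
        Matrix.one_apply, if_true, if_false] <;>
      simp only [mul_assoc, hmvQ] <;> simp only [hmv]
    · rw [← mul_add, ← mul_add, hkey, hrrr]
    · rw [h2]; norm_num
    · rw [h3]; norm_num
    · rw [← mul_add, ← mul_add, ← h6, add_comm, ← hr2, hrrr]
  · rw [hTbar]
    ext i j
    fin_cases i <;> fin_cases j <;>
      simp only [T, x, Matrix.mul_apply, Fin.sum_univ_two, Matrix.smul_apply, smul_eq_mul,
        Matrix.cons_val', Matrix.cons_val_zero, Matrix.cons_val_one, Matrix.head_cons,
        Matrix.head_fin_const, Matrix.empty_val', Matrix.cons_val_fin_one, Fin.zero_eta,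
        Fin.mk_one, Fin.isValue, Matrix.of_apply, Matrix.vecHead, Matrix.vecTail,
        Matrix.one_apply_eq, Matrix.one_apply_ne, mul_neg, neg_mul, neg_neg,
        Matrix.one_apply, if_true, if_false] <;>
      simp only [mul_assoc, hmvQ] <;> simp only [hmv]
    · rw [← mul_add, ← mul_add, ← hr2, hrrr]
    · rw [h4]; norm_num
    · rw [h1]; norm_num
    · rw [← h6, add_comm, ← mul_add, ← mul_add, hkey, hrrr]
  · simp only [T, x, Matrix.smul_apply, smul_eq_mul,
      Matrix.cons_val', Matrix.cons_val_zero, Matrix.cons_val_one, Matrix.head_cons,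
      Matrix.head_fin_const, Matrix.empty_val', Matrix.cons_val_fin_one, Fin.zero_eta,
      Fin.mk_one, Fin.isValue, Matrix.of_apply, Matrix.vecHead, Matrix.vecTail,
      mul_neg, neg_mul, neg_neg, sub_neg_eq_add]
    simp only [mul_assoc, hmvQ]
    simp only [hmv]
    rw [← mul_add, ← mul_add, hkey, hrrr]
end

section
/- Let u ∈ M_{4×2}(A) be defined over the localized q-quaternion algebra A by u = (I₂ ; ρx/|x|²)·(1+ρ²/|x|²)^{−1/2}, where ρ > 0 is a central element commuting with everything and x the q-quaternion matrix. Then u†u = I₂, and consequently P := uu† ∈ M₄(A) is a self-adjoint idempotent: P² = P and P† = P. -/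
open Matrix

/-- over the localized q-quaternion *-algebra, the 4×2 matrix
u = (I₂ ; ρx/|x|²)·(1+ρ²/|x|²)^{−1/2} satisfies u†u = I₂, hence P := uu† is a
self-adjoint idempotent: P² = P and P† = P. -/
theorem instanton_projector {A : Type*} [Ring A] [StarRing A] [Algebra ℂ A]
    [StarModule ℂ A] (q : ℝ) (hq : q ≠ 0)
    (a g : A)
    (h1 : a * g = algebraMap ℂ A q * (g * a))
    (h2 : a * star g = algebraMap ℂ A q * (star g * a))
    (h3 : g * star a = algebraMap ℂ A q * (star a * g))
    (h4 : star g * star a = algebraMap ℂ A q * (star a * star g))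
    (h5 : a * star a - star a * a = algebraMap ℂ A (1 - q ^ 2) * (g * star g))
    (h6 : star g * g = g * star g)
    -- central self-adjoint inverse n2inv of |x|² = α*α + γ*γ
    (n2inv : A) (hn2c : ∀ y : A, Commute n2inv y) (hn2s : star n2inv = n2inv)
    (hn2 : n2inv * (star a * a + star g * g) = 1)
    (hn2' : (star a * a + star g * g) * n2inv = 1)
    -- central self-adjoint ρ (the instanton size)
    (ρ : A) (hρc : ∀ y : A, Commute ρ y) (hρs : star ρ = ρ)
    -- central self-adjoint positive element s = (1+ρ²/|x|²)^{-1/2}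
    (s : A) (hsc : ∀ y : A, Commute s y) (hss : star s = s)
    (hs : s * s * (1 + ρ * ρ * n2inv) = 1)
    (hs' : (1 + ρ * ρ * n2inv) * (s * s) = 1) :
    let x : Matrix (Fin 2) (Fin 2) A := !![a, -(algebraMap ℂ A q) * star g; g, star a]
    let u : Matrix (Fin 2 ⊕ Fin 2) (Fin 2) A :=
      Matrix.of (Sum.elim
        (fun i j => (if i = j then s else 0))
        (fun i j => ρ * n2inv * x i j * s))
    let P : Matrix (Fin 2 ⊕ Fin 2) (Fin 2 ⊕ Fin 2) A := u * uᴴ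
    uᴴ * u = 1 ∧ P * P = P ∧ Pᴴ = P := by
  intro x u P
  have pull : ∀ (z : A), (∀ y : A, Commute z y) → ∀ u v : A, u * (z * v) = z * (u * v) :=
    fun z hz u v => by rw [← mul_assoc, ← (hz u).eq, mul_assoc]
  have hqc : ∀ y : A, Commute (algebraMap ℂ A (q : ℂ)) y := fun y => (Algebra.commutes _ y)
  have pull_s := pull s hsc
  have pull_s2 : ∀ y : A, y * s = s * y := fun y => ((hsc y).eq).symm
  have pull_ρ := pull ρ hρc
  have pull_n := pull n2inv hn2c
  have pull_q := pull _ hqc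
  have hqstar : star (algebraMap ℂ A (q : ℂ)) = algebraMap ℂ A (q : ℂ) := by
    rw [← algebraMap_star_comm, Complex.star_def, Complex.conj_ofReal]
  have key : ∀ b c : A, star (ρ * n2inv * b * s) * (ρ * n2inv * c * s)
      = s * (s * (ρ * (ρ * (n2inv * (n2inv * (star b * c)))))) := by
    intro b c
    simp only [StarMul.star_mul, hss, hn2s, hρs]
    simp only [mul_assoc]
    simp only [pull_n]
    simp only [pull_ρ]
    simp only [pull_s, pull_s2]
  have fin10 : ((1 : Fin 2) = 0) = False := by simp
  have fin01 : ((0 : Fin 2) = 1) = False := by simp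
  have hkey : uᴴ * u = 1 := by
    ext j k
    fin_cases j <;> fin_cases k <;>
      simp only [u, x, Matrix.mul_apply, Fintype.sum_sum_type, Fin.sum_univ_two,
        conjTranspose_apply, Matrix.of_apply, Sum.elim_inl, Sum.elim_inr,
        Matrix.cons_val', Matrix.cons_val_zero, Matrix.cons_val_one, Matrix.head_cons,
        Matrix.head_fin_const, Matrix.empty_val', Matrix.cons_val_fin_one,
        Matrix.one_apply, Fin.zero_eta, Fin.mk_one, fin10, fin01, if_true, if_false,
        star_zero, mul_zero, zero_mul, add_zero, zero_add, hss, key]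
    · -- (0,0)
      rw [← mul_add, ← mul_add, ← mul_add, ← mul_add, ← mul_add, ← mul_add, ← mul_add, hn2,
        mul_one,
        show s * (s + s * (ρ * (ρ * n2inv))) = s * s * (1 + ρ * ρ * n2inv) from by
          noncomm_ring,
        hs]
    · -- (0,1)
      rw [h4,
        show star a * (-(algebraMap ℂ A (q : ℂ)) * star g)
            = -(algebraMap ℂ A (q : ℂ) * (star a * star g)) from by
          rw [neg_mul, mul_neg, ← mul_assoc, ← (hqc (star a)).eq, mul_assoc]]
      simp only [mul_neg, neg_add_cancel]
    · -- (1,0)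
      rw [star_star, h1,
        show star (-(algebraMap ℂ A (q : ℂ)) * star g) * a
            = -(algebraMap ℂ A (q : ℂ) * (g * a)) from by
          simp only [StarMul.star_mul, star_neg, star_star, hqstar, mul_neg, neg_mul]
          rw [show g * algebraMap ℂ A (q : ℂ) * a = algebraMap ℂ A (q : ℂ) * (g * a) from by
            rw [← (hqc g).eq, mul_assoc]]]
      simp only [mul_neg, neg_add_cancel]
    · -- (1,1)
      have h5' : a * star a = star a * a + algebraMap ℂ A (1 - (q : ℂ) ^ 2) * (g * star g) :=
        sub_eq_iff_eq_add'.mp h5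
      have he2 : algebraMap ℂ A (1 - (q : ℂ) ^ 2)
          = 1 - algebraMap ℂ A (q : ℂ) * algebraMap ℂ A (q : ℂ) := by
        rw [_root_.map_sub, _root_.map_one, _root_.map_pow, pow_two]
      have hcore : algebraMap ℂ A (q : ℂ) * (algebraMap ℂ A (q : ℂ) * (g * star g)) + a * star a
          = star a * a + star g * g := by
        rw [h5', he2, h6]; noncomm_ring
      rw [star_star,
        show star (-(algebraMap ℂ A (q : ℂ)) * star g) * (-(algebraMap ℂ A (q : ℂ)) * star g)
            = algebraMap ℂ A (q : ℂ) * (algebraMap ℂ A (q : ℂ) * (g * star g)) from by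
          simp only [StarMul.star_mul, star_neg, star_star, hqstar, mul_neg, neg_mul, neg_neg]
          rw [← (hqc g).eq, mul_assoc, pull_q]]
      rw [← mul_add, ← mul_add, ← mul_add, ← mul_add, ← mul_add, ← mul_add, ← mul_add, hcore,
        hn2, mul_one,
        show s * (s + s * (ρ * (ρ * n2inv))) = s * s * (1 + ρ * ρ * n2inv) from by
          noncomm_ring,
        hs]
  refine ⟨hkey, ?_, ?_⟩
  · show u * uᴴ * (u * uᴴ) = u * uᴴ
    rw [Matrix.mul_assoc, ← Matrix.mul_assoc uᴴ u uᴴ, hkey, Matrix.one_mul]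
  · show (u * uᴴ)ᴴ = u * uᴴ
    rw [conjTranspose_mul, conjTranspose_conjTranspose]
end
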